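/- Let p ≥ 1 be an integer and z', w' real numbers. Let V(x_1,…,x_p) = ∏_{1 ≤ i < j ≤ p}(x_j − x_i) and let 𝒟_{z',w',p} = ∑_{i=1}^{p} [x_i(1−x_i)·∂²/∂x_i² + (w'+1 − (w'+z'−p+2)x_i)·∂/∂x_i]. Then 𝒟_{z',w',p} V = −K_{p,z',w'} · V identically, where K_{p,z',w'} = ∑_{i=0}^{p−1} i(i+w'+z'+1−p) = (p(p−1)/2)·(w'+z' − (p−2)/3). -/

import Mathlib

open Finset

/-- The Vandermonde polynomial `V(x_1,…,x_p) = ∏_{1 ≤ i < j ≤ p}(x_j − x_i)`. -/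
noncomputable def vandR (p : ℕ) (x : Fin p → ℝ) : ℝ :=
  ∏ i : Fin p, ∏ j ∈ Finset.univ.filter (fun j : Fin p => i < j), (x j - x i)

noncomputable def vandC (p : ℕ) (x : Fin p → ℝ) (i : Fin p) : ℝ :=
  (-1 : ℝ) ^ (Finset.univ.filter (fun j : Fin p => i < j)).card *
    ∏ a ∈ Finset.univ.erase i, ∏ b ∈ (Finset.univ.filter (fun j : Fin p => a < j)).erase i,
      (x b - x a)

lemma prod_neg' {ι : Type*} (s : Finset ι) (f : ι → ℝ) :
    ∏ j ∈ s, (-f j) = (-1:ℝ)^s.card * ∏ j ∈ s, f j := by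
  calc ∏ j ∈ s, (-f j) = ∏ j ∈ s, ((-1:ℝ) * f j) := by simp
  _ = (∏ _j ∈ s, (-1:ℝ)) * ∏ j ∈ s, f j := Finset.prod_mul_distrib
  _ = (-1:ℝ)^s.card * ∏ j ∈ s, f j := by rw [Finset.prod_const]

lemma vandR_update (p : ℕ) (x : Fin p → ℝ) (i : Fin p) (t : ℝ) :
    vandR p (Function.update x i t) = vandC p x i * ∏ j ∈ Finset.univ.erase i, (t - x j) := by
  classical
  set y := Function.update x i t with hy
  have hyi : y i = t := Function.update_self i t x
  have hyj : ∀ j, j ≠ i → y j = x j := fun j hj => Function.update_of_ne hj t x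
  have hsplit : (Finset.univ.erase i : Finset (Fin p))
      = (Finset.univ.filter (fun j : Fin p => j < i)) ∪ (Finset.univ.filter (fun j : Fin p => i < j)) := by
    ext a
    simp only [mem_erase, mem_univ, and_true, mem_union, mem_filter, true_and]
    constructor
    · exact fun h => lt_or_gt_of_ne h
    · rintro (h | h)
      · exact ne_of_lt h
      · exact ne_of_gt h
  have hdisj : Disjoint (Finset.univ.filter (fun j : Fin p => j < i))
      (Finset.univ.filter (fun j : Fin p => i < j)) := by
    rw [disjoint_filter]
    intro a _ h1
    exact not_lt.2 (le_of_lt h1)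
  unfold vandR
  rw [← Finset.mul_prod_erase Finset.univ _ (Finset.mem_univ i)]
  have h1 : ∏ j ∈ Finset.univ.filter (fun j : Fin p => i < j), (y j - y i)
      = (-1:ℝ) ^ (Finset.univ.filter (fun j : Fin p => i < j)).card *
        ∏ j ∈ Finset.univ.filter (fun j : Fin p => i < j), (t - x j) := by
    rw [← prod_neg']
    refine Finset.prod_congr rfl fun b hb => ?_
    rw [hyi, hyj b (by simp only [mem_filter] at hb; exact (ne_of_gt hb.2))]
    ring
  have h2 : ∀ a ∈ Finset.univ.erase i,
      ∏ b ∈ Finset.univ.filter (fun j : Fin p => a < j), (y b - y a)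
      = (if a < i then (t - x a) else 1) *
        ∏ b ∈ (Finset.univ.filter (fun j : Fin p => a < j)).erase i, (x b - x a) := by
    intro a ha
    have hane : a ≠ i := (Finset.mem_erase.1 ha).1
    have hya : y a = x a := hyj a hane
    by_cases h : a < i
    · have hi : i ∈ Finset.univ.filter (fun j : Fin p => a < j) := by
        simp [h]
      rw [← Finset.mul_prod_erase _ _ hi, hyi, hya, if_pos h]
      congr 1
      refine Finset.prod_congr rfl fun b hb => ?_
      rw [hyj b (Finset.mem_erase.1 hb).1]
    · have hi : i ∉ Finset.univ.filter (fun j : Fin p => a < j) := by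
        simp [h]
      rw [Finset.erase_eq_of_notMem hi, if_neg h, one_mul]
      refine Finset.prod_congr rfl fun b hb => ?_
      have : b ≠ i := by
        rintro rfl
        exact hi hb
      rw [hyj b this, hya]
  rw [Finset.prod_congr rfl h2, Finset.prod_mul_distrib]
  have h3 : ∏ a ∈ Finset.univ.erase i, (if a < i then (t - x a) else 1)
      = ∏ a ∈ Finset.univ.filter (fun j : Fin p => j < i), (t - x a) := by
    rw [Finset.prod_filter]
    exact Finset.prod_erase _ (by simp)
  rw [h1, h3]
  unfold vandC
  rw [hsplit]
  simp only [Finset.prod_union hdisj]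
  ring

lemma hasDerivAt_prodlin {p : ℕ} (u : Finset (Fin p)) (x : Fin p → ℝ) (s : ℝ) :
    HasDerivAt (fun t => ∏ j ∈ u, (t - x j)) (∑ k ∈ u, ∏ j ∈ u.erase k, (s - x j)) s := by
  have h := HasDerivAt.fun_finsetProd (u := u) (f := fun j t => t - x j) (f' := fun _ => 1)
    (fun j _ => (hasDerivAt_id s).sub_const (x j))
  simpa using h

lemma deriv_vand (p : ℕ) (x : Fin p → ℝ) (i : Fin p) :
    deriv (fun t => vandR p (Function.update x i t))
      = fun s => vandC p x i *
          ∑ k ∈ Finset.univ.erase i, ∏ j ∈ (Finset.univ.erase i).erase k, (s - x j) := by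
  funext s
  have h : HasDerivAt (fun t => vandR p (Function.update x i t))
      (vandC p x i * ∑ k ∈ Finset.univ.erase i, ∏ j ∈ (Finset.univ.erase i).erase k, (s - x j)) s := by
    have := (hasDerivAt_prodlin (Finset.univ.erase i) x s).const_mul (vandC p x i)
    refine this.congr_of_eventuallyEq ?_
    filter_upwards with t
    rw [vandR_update]
  exact h.deriv

lemma iteratedDeriv2_vand (p : ℕ) (x : Fin p → ℝ) (i : Fin p) (s : ℝ) :
    iteratedDeriv 2 (fun t => vandR p (Function.update x i t)) s
      = vandC p x i * ∑ k ∈ Finset.univ.erase i, ∑ l ∈ (Finset.univ.erase i).erase k,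
          ∏ j ∈ ((Finset.univ.erase i).erase k).erase l, (s - x j) := by
  rw [show (2:ℕ) = 1 + 1 from rfl, iteratedDeriv_succ, iteratedDeriv_one, deriv_vand]
  have h : HasDerivAt (fun s => vandC p x i *
      ∑ k ∈ Finset.univ.erase i, ∏ j ∈ (Finset.univ.erase i).erase k, (s - x j))
      (vandC p x i * ∑ k ∈ Finset.univ.erase i, ∑ l ∈ (Finset.univ.erase i).erase k,
          ∏ j ∈ ((Finset.univ.erase i).erase k).erase l, (s - x j)) s := by
    exact (HasDerivAt.fun_sum (fun k _ => hasDerivAt_prodlin ((Finset.univ.erase i).erase k) x s)).const_mul _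
  exact h.deriv

lemma sum_pair_bridge {M : Type*} [AddCommMonoid M] (F : Fin p → Fin p → M) :
    ∑ i : Fin p, ∑ k ∈ Finset.univ.erase i, F i k
      = ∑ q ∈ (Finset.univ : Finset (Fin p × Fin p)).filter (fun q => q.1 ≠ q.2),
          F q.1 q.2 := by
  rw [Finset.sum_filter, Fintype.sum_prod_type]
  refine Finset.sum_congr rfl fun i _ => ?_
  rw [← Finset.sum_filter]
  refine Finset.sum_congr ?_ fun k _ => rfl
  ext k
  simp [ne_comm, eq_comm]

lemma sum_triple_bridge {M : Type*} [AddCommMonoid M] (F : Fin p → Fin p → Fin p → M) :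
    ∑ i : Fin p, ∑ k ∈ Finset.univ.erase i, ∑ l ∈ (Finset.univ.erase i).erase k, F i k l
      = ∑ t ∈ (Finset.univ : Finset (Fin p × Fin p × Fin p)).filter
          (fun t => t.1 ≠ t.2.1 ∧ t.1 ≠ t.2.2 ∧ t.2.1 ≠ t.2.2), F t.1 t.2.1 t.2.2 := by
  rw [Finset.sum_filter, Fintype.sum_prod_type]
  refine Finset.sum_congr rfl fun i _ => ?_
  rw [Fintype.sum_prod_type]
  have step1 : ∀ k : Fin p,
      (∑ l : Fin p, if i ≠ k ∧ i ≠ l ∧ k ≠ l then F i k l else 0)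
      = if i ≠ k then (∑ l : Fin p, if i ≠ l ∧ k ≠ l then F i k l else 0) else 0 := by
    intro k
    by_cases h : i = k
    · simp [h]
    · simp [h]
  calc ∑ k ∈ Finset.univ.erase i, ∑ l ∈ (Finset.univ.erase i).erase k, F i k l
      = ∑ k ∈ Finset.univ.erase i, ∑ l : Fin p, if i ≠ l ∧ k ≠ l then F i k l else 0 := by
        refine Finset.sum_congr rfl fun k _ => ?_
        rw [← Finset.sum_filter]
        refine Finset.sum_congr ?_ fun l _ => rfl
        ext l
        simp only [mem_filter, mem_univ, true_and, mem_erase, ne_eq]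
        tauto
    _ = ∑ k : Fin p, if i ≠ k then (∑ l : Fin p, if i ≠ l ∧ k ≠ l then F i k l else 0) else 0 := by
        rw [← Finset.sum_filter]
        refine Finset.sum_congr ?_ fun k _ => rfl
        ext k
        simp [ne_comm, eq_comm]
    _ = ∑ k : Fin p, ∑ l : Fin p, if i ≠ k ∧ i ≠ l ∧ k ≠ l then F i k l else 0 := by
        refine Finset.sum_congr rfl fun k _ => (step1 k).symm

-- per-element identities
lemma pair_id (β w a b : ℝ) (h : a ≠ b) :
    (w - β * a) / (a - b) + (w - β * b) / (b - a) = -β := by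
  have h1 : a - b ≠ 0 := sub_ne_zero.2 h
  have h2 : b - a ≠ 0 := sub_ne_zero.2 h.symm
  field_simp
  ring

lemma triple_id (a b c : ℝ) (hab : a ≠ b) (hac : a ≠ c) (hbc : b ≠ c) :
    a * (1 - a) / ((a - b) * (a - c)) + b * (1 - b) / ((b - c) * (b - a))
      + c * (1 - c) / ((c - a) * (c - b)) = -1 := by
  have h1 : a - b ≠ 0 := sub_ne_zero.2 hab
  have h2 : a - c ≠ 0 := sub_ne_zero.2 hac
  have h3 : b - c ≠ 0 := sub_ne_zero.2 hbc
  have h4 : b - a ≠ 0 := sub_ne_zero.2 hab.symm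
  have h5 : c - a ≠ 0 := sub_ne_zero.2 hac.symm
  have h6 : c - b ≠ 0 := sub_ne_zero.2 hbc.symm
  field_simp
  ring

-- counting
lemma count_pair : ∑ i : Fin p, ∑ _k ∈ Finset.univ.erase i, (1:ℝ)
    = (p:ℝ) * ((p:ℝ) - 1) := by
  simp only [Finset.sum_const, nsmul_eq_mul, mul_one, Finset.card_erase_of_mem,
    Finset.mem_univ, Finset.card_univ, Fintype.card_fin]
  cases p with
  | zero => simp
  | succ n => push_cast [Nat.succ_sub_one]; ring

lemma count_triple : ∑ i : Fin p, ∑ k ∈ Finset.univ.erase i,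
      ∑ _l ∈ (Finset.univ.erase i).erase k, (1:ℝ)
    = (p:ℝ) * ((p:ℝ) - 1) * ((p:ℝ) - 2) := by
  have h : ∀ (i : Fin p), ∀ k ∈ Finset.univ.erase i,
      ∑ _l ∈ (Finset.univ.erase i).erase k, (1:ℝ) = ((p - 2 : ℕ) : ℝ) := by
    intro i k hk
    rw [Finset.sum_const, Finset.card_erase_of_mem hk, Finset.card_erase_of_mem (Finset.mem_univ i)]
    simp [Finset.card_univ]
    omega
  calc ∑ i : Fin p, ∑ k ∈ Finset.univ.erase i, ∑ _l ∈ (Finset.univ.erase i).erase k, (1:ℝ)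
      = ∑ i : Fin p, ∑ _k ∈ Finset.univ.erase i, ((p - 2 : ℕ) : ℝ) := by
        exact Finset.sum_congr rfl fun i _ => Finset.sum_congr rfl (h i)
    _ = (p:ℝ) * ((p:ℝ) - 1) * ((p:ℝ) - 2) := by
        simp only [Finset.sum_const, nsmul_eq_mul, Finset.card_erase_of_mem, Finset.mem_univ,
          Finset.card_univ, Fintype.card_fin]
        match p with
        | 0 => norm_num
        | 1 => norm_num
        | 2 => norm_num
        | (n+3) =>
          have : (n + 3 - 2 : ℕ) = n + 1 := by omega
          rw [this]
          push_cast
          ring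

-- S1
lemma S1_lemma (β w : ℝ) (x : Fin p → ℝ) (hinj : Function.Injective x) :
    ∑ i : Fin p, ∑ k ∈ Finset.univ.erase i, (w - β * x i) / (x i - x k)
      = -β * ((p:ℝ) * ((p:ℝ) - 1)) / 2 := by
  set S := ∑ i : Fin p, ∑ k ∈ Finset.univ.erase i, (w - β * x i) / (x i - x k) with hS
  have hswap : S = ∑ i : Fin p, ∑ k ∈ Finset.univ.erase i, (w - β * x k) / (x k - x i) := by
    rw [hS, sum_pair_bridge, sum_pair_bridge]
    refine Finset.sum_nbij' (fun q => (q.2, q.1)) (fun q => (q.2, q.1)) ?_ ?_ ?_ ?_ ?_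
    · intro q hq; simp only [Finset.mem_filter, Finset.mem_univ, true_and] at *; exact hq.symm
    · intro q hq; simp only [Finset.mem_filter, Finset.mem_univ, true_and] at *; exact hq.symm
    · intro q _; rfl
    · intro q _; rfl
    · intro q _; rfl
  have h2 : S + S = -β * ((p:ℝ) * ((p:ℝ) - 1)) := by
    nth_rewrite 2 [hswap]
    rw [hS, ← Finset.sum_add_distrib]
    have : ∀ i : Fin p, (∑ k ∈ Finset.univ.erase i, (w - β * x i) / (x i - x k))
        + (∑ k ∈ Finset.univ.erase i, (w - β * x k) / (x k - x i))
        = ∑ k ∈ Finset.univ.erase i, (-β) := by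
      intro i
      rw [← Finset.sum_add_distrib]
      refine Finset.sum_congr rfl fun k hk => ?_
      have hik : i ≠ k := fun h => (Finset.mem_erase.1 hk).1 h.symm
      exact pair_id β w (x i) (x k) (fun h => hik (hinj h))
    calc ∑ i : Fin p, ((∑ k ∈ Finset.univ.erase i, (w - β * x i) / (x i - x k))
            + ∑ k ∈ Finset.univ.erase i, (w - β * x k) / (x k - x i))
        = ∑ i : Fin p, ∑ k ∈ Finset.univ.erase i, (-β) :=
          Finset.sum_congr rfl fun i _ => this i
      _ = -β * ((p:ℝ) * ((p:ℝ) - 1)) := by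
          have := count_pair (p := p)
          calc ∑ i : Fin p, ∑ _k ∈ Finset.univ.erase i, (-β)
              = ∑ i : Fin p, ∑ _k ∈ Finset.univ.erase i, ((-β) * 1) := by simp
            _ = (-β) * ∑ i : Fin p, ∑ _k ∈ Finset.univ.erase i, (1:ℝ) := by
                rw [Finset.mul_sum]
                exact Finset.sum_congr rfl fun i _ => by rw [Finset.mul_sum]
            _ = -β * ((p:ℝ) * ((p:ℝ) - 1)) := by rw [count_pair]
  linarith

lemma S2_lemma (x : Fin p → ℝ) (hinj : Function.Injective x) :
    ∑ i : Fin p, ∑ k ∈ Finset.univ.erase i, ∑ l ∈ (Finset.univ.erase i).erase k,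
        (x i * (1 - x i)) / ((x i - x k) * (x i - x l))
      = -((p:ℝ) * ((p:ℝ) - 1) * ((p:ℝ) - 2)) / 3 := by
  set T := (Finset.univ : Finset (Fin p × Fin p × Fin p)).filter
      (fun t => t.1 ≠ t.2.1 ∧ t.1 ≠ t.2.2 ∧ t.2.1 ≠ t.2.2) with hT
  set G : Fin p × Fin p × Fin p → ℝ :=
      fun t => (x t.1 * (1 - x t.1)) / ((x t.1 - x t.2.1) * (x t.1 - x t.2.2)) with hG
  have hmemT : ∀ t : Fin p × Fin p × Fin p, t ∈ T ↔ t.1 ≠ t.2.1 ∧ t.1 ≠ t.2.2 ∧ t.2.1 ≠ t.2.2 := by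
    intro t; simp [hT]
  have hcyc : ∀ (H : Fin p × Fin p × Fin p → ℝ), ∑ t ∈ T, H t
      = ∑ t ∈ T, H (t.2.1, t.2.2, t.1) := by
    intro H
    refine Finset.sum_nbij' (fun t => (t.2.2, t.1, t.2.1)) (fun t => (t.2.1, t.2.2, t.1))
      ?_ ?_ ?_ ?_ ?_
    · intro t ht; rw [hmemT] at *; tauto
    · intro t ht; rw [hmemT] at *; tauto
    · intro t _; rfl
    · intro t _; rfl
    · intro t _; rfl
  set S := ∑ t ∈ T, G t with hS
  have h3 : S + S + S = -((p:ℝ) * ((p:ℝ) - 1) * ((p:ℝ) - 2)) := by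
    have e1 : S = ∑ t ∈ T, G (t.2.1, t.2.2, t.1) := hcyc G
    have e2 : S = ∑ t ∈ T, G (t.2.2, t.1, t.2.1) := by
      rw [e1]; exact hcyc (fun t => G (t.2.1, t.2.2, t.1))
    have e3 : S + S + S = ∑ t ∈ T, (G t + G (t.2.1, t.2.2, t.1) + G (t.2.2, t.1, t.2.1)) := by
      rw [Finset.sum_add_distrib, Finset.sum_add_distrib, ← hS, ← e1, ← e2]
    rw [e3]
    have key : ∀ t ∈ T, G t + G (t.2.1, t.2.2, t.1) + G (t.2.2, t.1, t.2.1) = -1 := by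
      intro t ht
      rw [hmemT] at ht
      obtain ⟨h1, h2, h3⟩ := ht
      exact triple_id (x t.1) (x t.2.1) (x t.2.2)
        (fun h => h1 (hinj h)) (fun h => h2 (hinj h)) (fun h => h3 (hinj h))
    calc ∑ t ∈ T, (G t + G (t.2.1, t.2.2, t.1) + G (t.2.2, t.1, t.2.1))
        = ∑ _t ∈ T, (-1 : ℝ) := Finset.sum_congr rfl key
      _ = -((p:ℝ) * ((p:ℝ) - 1) * ((p:ℝ) - 2)) := by
          rw [Finset.sum_const]
          have hcard : ∑ _t ∈ T, (1:ℝ) = (p:ℝ) * ((p:ℝ) - 1) * ((p:ℝ) - 2) := by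
            rw [hT, ← sum_triple_bridge (fun _ _ _ => (1:ℝ))]
            exact count_triple
          rw [Finset.sum_const] at hcard
          simp only [nsmul_eq_mul, mul_one] at hcard ⊢
          rw [hcard]; ring
  have hfinal : ∑ i : Fin p, ∑ k ∈ Finset.univ.erase i, ∑ l ∈ (Finset.univ.erase i).erase k,
      (x i * (1 - x i)) / ((x i - x k) * (x i - x l)) = S := by
    rw [hS, hG, hT]
    exact sum_triple_bridge (fun i k l => (x i * (1 - x i)) / ((x i - x k) * (x i - x l)))
  rw [hfinal]
  linarith

lemma sumId (p : ℕ) : ∑ i ∈ Finset.range p, (i:ℝ) = (p:ℝ) * ((p:ℝ) - 1) / 2 := by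
  induction p with
  | zero => simp
  | succ n ih => rw [Finset.sum_range_succ, ih]; push_cast; ring

lemma sumSq (p : ℕ) : ∑ i ∈ Finset.range p, (i:ℝ)^2
    = (p:ℝ) * ((p:ℝ) - 1) * (2*(p:ℝ) - 1) / 6 := by
  induction p with
  | zero => simp
  | succ n ih => rw [Finset.sum_range_succ, ih]; push_cast; ring

lemma Kval (p : ℕ) (z' w' : ℝ) :
    ∑ i ∈ Finset.range p, (i : ℝ) * ((i : ℝ) + w' + z' + 1 - p)
      = (w' + z' - (p:ℝ) + 2) * ((p:ℝ) * ((p:ℝ) - 1)) / 2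
        + (p:ℝ) * ((p:ℝ) - 1) * ((p:ℝ) - 2) / 3 := by
  have h : ∀ i ∈ Finset.range p, (i : ℝ) * ((i : ℝ) + w' + z' + 1 - p)
      = (i:ℝ)^2 + (w' + z' + 1 - p) * (i:ℝ) := fun i _ => by ring
  rw [Finset.sum_congr rfl h, Finset.sum_add_distrib, ← Finset.mul_sum, sumId, sumSq]
  ring

lemma Kval2 (p : ℕ) (z' w' : ℝ) :
    ∑ i ∈ Finset.range p, (i : ℝ) * ((i : ℝ) + w' + z' + 1 - p)
      = ((p : ℝ) * ((p : ℝ) - 1) / 2) * (w' + z' - ((p : ℝ) - 2) / 3) := by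
  rw [Kval]; ring

noncomputable def Gfun (p : ℕ) (z' w' : ℝ) (x : Fin p → ℝ) : ℝ :=
  ∑ i : Fin p,
    (x i * (1 - x i) * (vandC p x i * ∑ k ∈ Finset.univ.erase i,
        ∑ l ∈ (Finset.univ.erase i).erase k,
          ∏ j ∈ ((Finset.univ.erase i).erase k).erase l, (x i - x j))
      + (w' + 1 - (w' + z' - p + 2) * x i) * (vandC p x i * ∑ k ∈ Finset.univ.erase i,
          ∏ j ∈ (Finset.univ.erase i).erase k, (x i - x j)))


lemma core (p : ℕ) (z' w' : ℝ) (x : Fin p → ℝ) (hinj : Function.Injective x) :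
    Gfun p z' w' x
      = -(∑ i ∈ Finset.range p, (i : ℝ) * ((i : ℝ) + w' + z' + 1 - p)) * vandR p x := by
  have hV : ∀ i : Fin p, vandR p x = vandC p x i * ∏ j ∈ Finset.univ.erase i, (x i - x j) := by
    intro i
    have h := vandR_update p x i (x i)
    rwa [Function.update_eq_self] at h
  have key1 : ∀ i : Fin p, ∀ k ∈ Finset.univ.erase i,
      vandC p x i * ∏ j ∈ (Finset.univ.erase i).erase k, (x i - x j)
        = vandR p x / (x i - x k) := by
    intro i k hk
    have hki : k ≠ i := (Finset.mem_erase.1 hk).1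
    have hne : x i - x k ≠ 0 := sub_ne_zero.2 fun h => hki (hinj h).symm
    rw [eq_div_iff hne]
    calc vandC p x i * (∏ j ∈ (Finset.univ.erase i).erase k, (x i - x j)) * (x i - x k)
        = vandC p x i * ((x i - x k) * ∏ j ∈ (Finset.univ.erase i).erase k, (x i - x j)) := by
          ring
      _ = vandC p x i * ∏ j ∈ Finset.univ.erase i, (x i - x j) := by
          rw [← Finset.mul_prod_erase (Finset.univ.erase i) (fun j => x i - x j) hk]
      _ = vandR p x := (hV i).symm
  have key2 : ∀ i : Fin p, ∀ k ∈ Finset.univ.erase i, ∀ l ∈ (Finset.univ.erase i).erase k,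
      vandC p x i * ∏ j ∈ ((Finset.univ.erase i).erase k).erase l, (x i - x j)
        = vandR p x / ((x i - x k) * (x i - x l)) := by
    intro i k hk l hl
    have hki : k ≠ i := (Finset.mem_erase.1 hk).1
    have hli : l ≠ i := (Finset.mem_erase.1 (Finset.mem_erase.1 hl).2).1
    have hnek : x i - x k ≠ 0 := sub_ne_zero.2 fun h => hki (hinj h).symm
    have hnel : x i - x l ≠ 0 := sub_ne_zero.2 fun h => hli (hinj h).symm
    rw [eq_div_iff (mul_ne_zero hnek hnel)]
    calc vandC p x i * (∏ j ∈ ((Finset.univ.erase i).erase k).erase l, (x i - x j))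
          * ((x i - x k) * (x i - x l))
        = vandC p x i * ((x i - x k) *
            ((x i - x l) * ∏ j ∈ ((Finset.univ.erase i).erase k).erase l, (x i - x j))) := by
          ring
      _ = vandC p x i * ((x i - x k) * ∏ j ∈ (Finset.univ.erase i).erase k, (x i - x j)) := by
          rw [← Finset.mul_prod_erase ((Finset.univ.erase i).erase k) (fun j => x i - x j) hl]
      _ = vandC p x i * ∏ j ∈ Finset.univ.erase i, (x i - x j) := by
          rw [← Finset.mul_prod_erase (Finset.univ.erase i) (fun j => x i - x j) hk]
      _ = vandR p x := (hV i).symm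
  have hterm : ∀ i : Fin p,
      x i * (1 - x i) * (vandC p x i * ∑ k ∈ Finset.univ.erase i,
          ∑ l ∈ (Finset.univ.erase i).erase k,
            ∏ j ∈ ((Finset.univ.erase i).erase k).erase l, (x i - x j))
        + (w' + 1 - (w' + z' - p + 2) * x i) * (vandC p x i * ∑ k ∈ Finset.univ.erase i,
            ∏ j ∈ (Finset.univ.erase i).erase k, (x i - x j))
      = vandR p x *
          ((∑ k ∈ Finset.univ.erase i, ∑ l ∈ (Finset.univ.erase i).erase k,
              (x i * (1 - x i)) / ((x i - x k) * (x i - x l)))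
            + ∑ k ∈ Finset.univ.erase i, (w' + 1 - (w' + z' - p + 2) * x i) / (x i - x k)) := by
    intro i
    have e2 : vandC p x i * ∑ k ∈ Finset.univ.erase i, ∑ l ∈ (Finset.univ.erase i).erase k,
          ∏ j ∈ ((Finset.univ.erase i).erase k).erase l, (x i - x j)
        = ∑ k ∈ Finset.univ.erase i, ∑ l ∈ (Finset.univ.erase i).erase k,
            vandR p x / ((x i - x k) * (x i - x l)) := by
      rw [Finset.mul_sum]
      refine Finset.sum_congr rfl fun k hk => ?_
      rw [Finset.mul_sum]
      exact Finset.sum_congr rfl fun l hl => key2 i k hk l hl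
    have e1 : vandC p x i * ∑ k ∈ Finset.univ.erase i,
          ∏ j ∈ (Finset.univ.erase i).erase k, (x i - x j)
        = ∑ k ∈ Finset.univ.erase i, vandR p x / (x i - x k) := by
      rw [Finset.mul_sum]
      exact Finset.sum_congr rfl fun k hk => key1 i k hk
    rw [e1, e2, mul_add, Finset.mul_sum, Finset.mul_sum, Finset.mul_sum, Finset.mul_sum]
    congr 1
    · refine Finset.sum_congr rfl fun k _ => ?_
      rw [Finset.mul_sum, Finset.mul_sum]
      exact Finset.sum_congr rfl fun l _ => by ring
    · exact Finset.sum_congr rfl fun k _ => by ring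
  unfold Gfun
  rw [Finset.sum_congr rfl fun i _ => hterm i, ← Finset.mul_sum, Finset.sum_add_distrib,
    S2_lemma x hinj, S1_lemma (w' + z' - (p:ℝ) + 2) (w' + 1) x hinj, Kval]
  ring

lemma gfun_eq (p : ℕ) (z' w' : ℝ) (x : Fin p → ℝ) :
    Gfun p z' w' x
      = -(∑ i ∈ Finset.range p, (i : ℝ) * ((i : ℝ) + w' + z' + 1 - p)) * vandR p x := by
  classical
  have hcontG : Continuous (Gfun p z' w') := by unfold Gfun vandC; fun_prop
  have hcontV : Continuous (vandR p) := by unfold vandR; fun_prop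
  set Bad : Finset ℝ := ((Finset.univ : Finset (Fin p × Fin p)).filter
      (fun q => q.1 ≠ q.2)).image
        (fun q => (x q.1 - x q.2) / ((q.2 : ℝ) - (q.1 : ℝ))) with hBad
  have hinj' : ∀ e : ℝ, e ∉ Bad → Function.Injective (fun i : Fin p => x i + e * (i : ℝ)) := by
    intro e hB i j hij
    by_contra hne
    simp only at hij
    have hvalne : ((i : ℕ) : ℝ) ≠ ((j : ℕ) : ℝ) := by
      have : (i : ℕ) ≠ (j : ℕ) := fun h => hne (Fin.val_injective h)
      exact_mod_cast this
    have hsub : ((j : ℝ)) - ((i : ℝ)) ≠ 0 := sub_ne_zero.2 fun h => hvalne h.symm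
    have heq : e = (x i - x j) / ((j : ℝ) - (i : ℝ)) := by
      rw [eq_div_iff hsub]
      linarith [hij]
    apply hB
    rw [hBad, Finset.mem_image]
    exact ⟨(i, j), by simp [hne], heq.symm⟩
  have hex : ∀ n : ℕ, ∃ e : ℝ, e ∈ Set.Ioo (0:ℝ) (1/((n:ℝ)+1)) ∧ e ∉ Bad := by
    intro n
    obtain ⟨e, he, heB⟩ := (Set.Ioo_infinite (by positivity : (0:ℝ) < 1/((n:ℝ)+1))).exists_notMem_finset Bad
    exact ⟨e, he, heB⟩
  choose ε hε1 hε2 using hex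
  have htend : Filter.Tendsto ε Filter.atTop (nhds 0) := by
    refine squeeze_zero (fun n => (hε1 n).1.le) (fun n => (hε1 n).2.le) ?_
    exact tendsto_one_div_add_atTop_nhds_zero_nat
  set y : ℕ → Fin p → ℝ := fun n i => x i + ε n * (i : ℝ) with hy
  have hytend : Filter.Tendsto y Filter.atTop (nhds x) := by
    rw [tendsto_pi_nhds]
    intro i
    have : Filter.Tendsto (fun n => x i + ε n * (i : ℝ)) Filter.atTop (nhds (x i + 0 * (i:ℝ))) :=
      Filter.Tendsto.add tendsto_const_nhds (htend.mul_const _)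
    simpa using this
  have hGy : ∀ n, Gfun p z' w' (y n)
      = -(∑ i ∈ Finset.range p, (i : ℝ) * ((i : ℝ) + w' + z' + 1 - p)) * vandR p (y n) :=
    fun n => core p z' w' (y n) (hinj' (ε n) (hε2 n))
  have t1 : Filter.Tendsto (fun n => Gfun p z' w' (y n)) Filter.atTop
      (nhds (Gfun p z' w' x)) := (hcontG.tendsto x).comp hytend
  have t2 : Filter.Tendsto (fun n => Gfun p z' w' (y n)) Filter.atTop
      (nhds (-(∑ i ∈ Finset.range p, (i : ℝ) * ((i : ℝ) + w' + z' + 1 - p)) * vandR p x)) := by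
    simp only [hGy]
    exact Filter.Tendsto.const_mul _ ((hcontV.tendsto x).comp hytend)
  exact tendsto_nhds_unique t1 t2

/-- the Vandermonde polynomial is an eigenfunction of the operator
`𝒟_{z',w',p} = ∑_i [x_i(1−x_i)·∂²/∂x_i² + (w'+1 − (w'+z'−p+2)x_i)·∂/∂x_i]`
with eigenvalue `−K_{p,z',w'}`, where
`K_{p,z',w'} = ∑_{i=0}^{p−1} i(i+w'+z'+1−p) = (p(p−1)/2)·(w'+z' − (p−2)/3)`. -/
theorem vandermonde_eigenfunction (p : ℕ) (hp : 1 ≤ p) (z' w' : ℝ) :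
    (∀ x : Fin p → ℝ,
      ∑ i : Fin p,
        (x i * (1 - x i)
            * iteratedDeriv 2 (fun t => vandR p (Function.update x i t)) (x i)
          + (w' + 1 - (w' + z' - p + 2) * x i)
            * deriv (fun t => vandR p (Function.update x i t)) (x i))
      = -(∑ i ∈ Finset.range p, (i : ℝ) * ((i : ℝ) + w' + z' + 1 - p)) * vandR p x)
    ∧ ∑ i ∈ Finset.range p, (i : ℝ) * ((i : ℝ) + w' + z' + 1 - p)
        = ((p : ℝ) * ((p : ℝ) - 1) / 2) * (w' + z' - ((p : ℝ) - 2) / 3) := by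
  constructor
  · intro x
    have h : ∀ i : Fin p,
        x i * (1 - x i)
            * iteratedDeriv 2 (fun t => vandR p (Function.update x i t)) (x i)
          + (w' + 1 - (w' + z' - p + 2) * x i)
            * deriv (fun t => vandR p (Function.update x i t)) (x i)
        = x i * (1 - x i) * (vandC p x i * ∑ k ∈ Finset.univ.erase i,
              ∑ l ∈ (Finset.univ.erase i).erase k,
                ∏ j ∈ ((Finset.univ.erase i).erase k).erase l, (x i - x j))
            + (w' + 1 - (w' + z' - p + 2) * x i) * (vandC p x i * ∑ k ∈ Finset.univ.erase i,
                ∏ j ∈ (Finset.univ.erase i).erase k, (x i - x j)) := by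
      intro i
      rw [iteratedDeriv2_vand, deriv_vand]
    rw [Finset.sum_congr rfl (fun i _ => h i)]
    exact gfun_eq p z' w' x
  · exact Kval2 p z' w'
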